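/- If x in GF(q⁴) satisfies x^{q²+q} + x^{q²+1} + x^{q+1} + x^{q²} + x^q + x + 1 = b for some b in GF(q⁴), then (x+x^q)^{q²+1} + (x+x^q) = b^q + b^{q²}. -/

import Mathlib

open Finset

theorem stmt3 (k : ℕ) (hk : 0 < k) (q : ℕ) (hq : q = 2^k) {F : Type*} [Field F] [Fintype F] [DecidableEq F] (hF : Fintype.card F = q^4) (x b : F)
    (h : x^(q^2+q) + x^(q^2+1) + x^(q+1) + x^(q^2) + x^q + x + 1 = b) :
    (x+x^q)^(q^2+1) + (x+x^q) = b^q + b^(q^2) := by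
  haveI : Fact (Nat.Prime 2) := ⟨Nat.prime_two⟩
  -- characteristic 2
  have htwo : (2 : F) = 0 := by
    have hc := FiniteField.cast_card_eq_zero F
    rw [hF, hq] at hc
    push_cast at hc
    rw [← pow_mul] at hc
    exact pow_eq_zero_iff (by positivity : k * 4 ≠ 0) |>.mp hc
  haveI hchar : CharP F 2 := by
    have hdvd : ringChar F ∣ 2 := ringChar.dvd (by exact_mod_cast htwo)
    rcases (Nat.prime_two.eq_one_or_self_of_dvd _ hdvd) with h2 | h2
    · exact absurd h2 CharP.ringChar_ne_one
    · exact h2 ▸ ringChar.charP F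
  subst hq
  set Q := 2^k with hQ
  have key : ∀ a c : F, (a + c)^Q = a^Q + c^Q := fun a c => add_pow_char_pow a c 2 k
  set y := x^Q with hy
  set z := y^Q with hz
  set w := z^Q with hw
  have hx2 : x^(Q^2) = z := by rw [pow_two, pow_mul, ← hy, ← hz]
  have hwQ : w^Q = x := by
    have : w^Q = x^(Q^4) := by rw [hw, hz, hy, ← pow_mul, ← pow_mul, ← pow_mul]; ring_nf
    rw [this, ← hF]; exact FiniteField.pow_card x
  have hb : z*y + z*x + y*x + z + y + x + 1 = b := by
    rw [← h]
    simp only [pow_add, pow_one, hx2, ← hy]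
  have hbQ : b^Q = w*z + w*y + z*y + w + z + y + 1 := by
    rw [← hb]
    simp only [key, mul_pow, one_pow, ← hy, ← hz, ← hw]
  have hbQ2 : b^(Q^2) = x*w + x*z + w*z + x + w + z + 1 := by
    rw [pow_two, pow_mul, hbQ]
    simp only [key, mul_pow, one_pow, hwQ, ← hz, ← hw]
  have hlhs : (x+y)^(Q^2) = z + w := by
    rw [pow_two, pow_mul, key, ← hy, key, ← hz, ← hw]
  rw [pow_add, pow_one, hlhs, hbQ, hbQ2]
  linear_combination (-(w*z + w + z + 1)) * htwo
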